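/- Let k be a field, n ≥ 1, R = k[x_1,…,x_n], and let I ⊆ R be a proper homogeneous 𝔪-primary ideal with dim_k Soc(R/I) = 1 (a homogeneous Gorenstein ideal of codimension n); let s be the socle degree of R/I. Let m ≥ 1 be an integer and f a nonzero homogeneous polynomial such that (x_1^m,…,x_n^m) : (f) = I and every exponent vector α in the support of f satisfies α_i ≤ m−1 for all i (i.e. no nonzero term of f lies in (x_1^m,…,x_n^m)). Then deg f = n(m−1) − s, and f is uniquely determined up to a nonzero scalar: any other nonzero homogeneous polynomial g with (x_1^m,…,x_n^m) : (g) = I whose support also lies in the box {α : α_i ≤ m−1 for all i} equals c·f for some nonzero c ∈ k. -/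

import Mathlib

open MvPolynomial

/-- The maximal graded ideal `𝔪 = (x_1, …, x_n)` of `k[x_1,…,x_n]`. -/
noncomputable def mIdealN (k : Type*) [Field k] (n : ℕ) : Ideal (MvPolynomial (Fin n) k) :=
  Ideal.span (Set.range (X : Fin n → MvPolynomial (Fin n) k))

/-- `dim_k Soc(R/I)`, the total dimension of the socle `(I : 𝔪)/I` of `R/I`. -/
noncomputable def socDimN {k : Type*} [Field k] {n : ℕ}
    (I : Ideal (MvPolynomial (Fin n) k)) : ℕ :=
  Module.finrank k
    ↥(Submodule.map (Ideal.Quotient.mkₐ k I).toLinearMap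
      ((Submodule.colon I (mIdealN k n)).restrictScalars k))



section Aux

variable {k : Type*} [Field k] {n m : ℕ}

/-- the exponent `(m-1, …, m-1)` -/
private noncomputable def topF (n m : ℕ) : Fin n →₀ ℕ :=
  Finsupp.equivFunOnFinite.symm (fun _ => m - 1)

private lemma topF_apply (i : Fin n) : topF n m i = m - 1 := rfl

private lemma degree_fin (α : Fin n →₀ ℕ) : α.degree = ∑ i, α i :=
  Finset.sum_subset (Finset.subset_univ _)
    (fun x _ hx => Finsupp.notMem_support_iff.mp hx)

private lemma degree_add (α β : Fin n →₀ ℕ) : (α + β).degree = α.degree + β.degree := by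
  simp [degree_fin, Finset.sum_add_distrib]

private lemma topF_degree : (topF n m).degree = n * (m - 1) := by
  simp [degree_fin, topF_apply, Finset.sum_const, mul_comm]

/-- the ideal `(x_1^m, …, x_n^m)` -/
private noncomputable def Jd (k : Type*) [Field k] (n m : ℕ) : Ideal (MvPolynomial (Fin n) k) :=
  Ideal.span (Set.range fun i : Fin n => (X i : MvPolynomial (Fin n) k) ^ m)

private lemma supp_degree {p : MvPolynomial (Fin n) k} {e : ℕ} (hp : p.IsHomogeneous e)
    {α : Fin n →₀ ℕ} (hα : α ∈ p.support) : α.degree = e := by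
  have := hp (MvPolynomial.mem_support_iff.mp hα)
  rw [Finsupp.degree_eq_weight_one]; exact this

private lemma mem_Jd_big {p : MvPolynomial (Fin n) k} (hp : p ∈ Jd k n m) :
    ∀ α ∈ p.support, ∃ i, m ≤ α i := by
  classical
  refine Submodule.span_induction ?_ ?_ ?_ ?_ hp
  · rintro x ⟨i, rfl⟩ α hα
    rw [support_X_pow] at hα
    simp only [Finset.mem_singleton] at hα
    exact ⟨i, by simp [hα]⟩
  · simp
  · intro x y _ _ hx hy α hα
    have := MvPolynomial.support_add hα
    rw [Finset.mem_union] at this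
    rcases this with h | h
    · exact hx α h
    · exact hy α h
  · intro r x _ hx α hα
    rw [smul_eq_mul] at hα
    have := MvPolynomial.support_mul r x hα
    rw [Finset.mem_add] at this
    obtain ⟨b, _, c, hc, rfl⟩ := this
    obtain ⟨i, hi⟩ := hx c hc
    exact ⟨i, le_trans hi (by simp)⟩

private lemma coeff_eq_zero_of_mem_Jd (hm : 1 ≤ m) {p : MvPolynomial (Fin n) k}
    (hp : p ∈ Jd k n m) {α : Fin n →₀ ℕ} (hα : ∀ i, α i ≤ m - 1) : coeff α p = 0 := by
  by_contra h
  obtain ⟨i, hi⟩ := mem_Jd_big hp α (MvPolynomial.mem_support_iff.mpr h)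
  have := hα i
  omega

private lemma mem_Jd_of_forall {p : MvPolynomial (Fin n) k}
    (h : ∀ α ∈ p.support, ∃ i, m ≤ α i) : p ∈ Jd k n m := by
  rw [← p.support_sum_monomial_coeff]
  refine Ideal.sum_mem _ fun α hα => ?_
  obtain ⟨i, hi⟩ := h α hα
  have hle : Finsupp.single i m ≤ α := Finsupp.single_le_iff.mpr hi
  have : monomial α (coeff α p) =
      monomial (α - Finsupp.single i m) (coeff α p) * (X i ^ m) := by
    rw [X_pow_eq_monomial, monomial_mul, tsub_add_cancel_of_le hle, mul_one]
  rw [this]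
  exact Ideal.mul_mem_left _ _ (Ideal.subset_span ⟨i, rfl⟩)

private lemma mem_Jd_of_high {p : MvPolynomial (Fin n) k} {D : ℕ}
    (hp : p.IsHomogeneous D) (hD : n * (m - 1) < D) : p ∈ Jd k n m := by
  refine mem_Jd_of_forall fun α hα => ?_
  by_contra hc
  push_neg at hc
  have h1 : α.degree = D := supp_degree hp hα
  have h2 : α.degree ≤ n * (m - 1) := by
    rw [degree_fin]
    calc ∑ i, α i ≤ ∑ _i : Fin n, (m - 1) :=
          Finset.sum_le_sum fun i _ => by have := hc i; omega
      _ = n * (m - 1) := by simp [mul_comm]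
  omega

private lemma mem_Jd_of_coeff_top (hm : 1 ≤ m) {p : MvPolynomial (Fin n) k}
    (hp : p.IsHomogeneous (n * (m - 1))) (h : coeff (topF n m) p = 0) : p ∈ Jd k n m := by
  refine mem_Jd_of_forall fun α hα => ?_
  by_contra hc
  push_neg at hc
  have hbox : ∀ i, α i ≤ m - 1 := fun i => by have := hc i; omega
  have hdeg : α.degree = n * (m - 1) := supp_degree hp hα
  have : α = topF n m := by
    have hsum : ∑ i, α i = ∑ _i : Fin n, (m - 1) := by
      rw [← degree_fin, hdeg]; simp [mul_comm]
    have h2 := (Finset.sum_eq_sum_iff_of_le (fun i _ => hbox i)).mp hsum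
    ext i
    rw [topF_apply]
    exact (h2 i (Finset.mem_univ i))
  rw [this] at hα
  exact (MvPolynomial.mem_support_iff.mp hα) h

/-- key coefficient computation: `coeff top (p * x^(top - α)) = coeff α p` for `α ≤ top`. -/
private lemma coeff_top_mul {p : MvPolynomial (Fin n) k} {α : Fin n →₀ ℕ}
    (hα : α ≤ topF n m) (c : k) :
    coeff (topF n m) (p * monomial (topF n m - α) c) = coeff α p * c := by
  rw [coeff_mul_monomial', if_pos tsub_le_self, tsub_tsub_cancel_of_le hα]

/-- The core degree computation: `s + e = n * (m - 1)`. -/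
private lemma degree_core (hm : 1 ≤ m) (I : Ideal (MvPolynomial (Fin n) k)) (s : ℕ)
    (hs : IsGreatest {t : ℕ | ∃ h : MvPolynomial (Fin n) k, h.IsHomogeneous t ∧ h ∉ I} s)
    (f : MvPolynomial (Fin n) k) (hf0 : f ≠ 0) (e : ℕ) (hfhom : f.IsHomogeneous e)
    (hcolon : Submodule.colon (Jd k n m) (Ideal.span {f}) = I)
    (hbox : ∀ α ∈ f.support, ∀ i, α i ≤ m - 1) :
    s + e = n * (m - 1) := by
  obtain ⟨α0, hα0⟩ : f.support.Nonempty := by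
    rw [Finset.nonempty_iff_ne_empty]
    simpa using hf0
  have hα0e : α0.degree = e := supp_degree hfhom hα0
  have hα0top : α0 ≤ topF n m := fun i => by rw [topF_apply]; exact hbox α0 hα0 i
  have hγdeg : (topF n m - α0).degree + e = n * (m - 1) := by
    rw [← hα0e, ← degree_add, tsub_add_cancel_of_le hα0top, topF_degree]
  -- the witness h0 = x^(top - α0) is not in I
  have hwit : (monomial (topF n m - α0) (1 : k)) ∉ I := by
    rw [← hcolon, Ideal.mem_colon_span_singleton]
    intro hmem
    have := coeff_eq_zero_of_mem_Jd hm hmem (fun i => le_of_eq (topF_apply i))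
    rw [mul_comm, coeff_top_mul hα0top] at this
    rw [mul_one] at this
    exact MvPolynomial.mem_support_iff.mp hα0 this
  have hd0 : (topF n m - α0).degree ∈
      {t : ℕ | ∃ h : MvPolynomial (Fin n) k, h.IsHomogeneous t ∧ h ∉ I} :=
    ⟨monomial (topF n m - α0) 1, isHomogeneous_monomial _ rfl, hwit⟩
  have hle1 : (topF n m - α0).degree ≤ s := hs.2 hd0
  -- upper bound on s
  obtain ⟨h, hhom, hnI⟩ := hs.1
  have hhf : h * f ∉ Jd k n m := by
    rw [← hcolon, Ideal.mem_colon_span_singleton] at hnI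
    exact hnI
  have : ¬ (n * (m - 1) < s + e) := fun hlt => hhf (mem_Jd_of_high (hhom.mul hfhom) hlt)
  omega

end Aux

/-- Let `I ⊆ k[x_1,…,x_n]` be a proper homogeneous `𝔪`-primary Gorenstein ideal with socle
degree `s`, and suppose `(x_1^m,…,x_n^m) : (f) = I` for a nonzero form `f` no term of which
lies in `(x_1^m,…,x_n^m)` (all exponents `≤ m−1`). Then `deg f = n(m−1) − s`, and `f` is
unique up to a nonzero scalar among such directrix forms. -/
theorem stmt12 {k : Type*} [Field k] (n : ℕ) (hn : 1 ≤ n)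
    (I : Ideal (MvPolynomial (Fin n) k))
    (hproper : I ≠ ⊤)
    (hprim : ∃ N : ℕ, 1 ≤ N ∧ (mIdealN k n) ^ N ≤ I)
    (hsoc : socDimN I = 1)
    (s : ℕ)
    (hs : IsGreatest {t : ℕ | ∃ h : MvPolynomial (Fin n) k, h.IsHomogeneous t ∧ h ∉ I} s)
    (m : ℕ) (hm : 1 ≤ m)
    (f : MvPolynomial (Fin n) k) (hf0 : f ≠ 0) (e : ℕ) (hfhom : f.IsHomogeneous e)
    (hcolon : Submodule.colon
        (Ideal.span (Set.range fun i : Fin n => (X i : MvPolynomial (Fin n) k) ^ m))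
        (Ideal.span {f}) = I)
    (hbox : ∀ α ∈ f.support, ∀ i, α i ≤ m - 1) :
    e = n * (m - 1) - s
    ∧ ∀ (g : MvPolynomial (Fin n) k) (e' : ℕ), g ≠ 0 → g.IsHomogeneous e' →
        Submodule.colon
            (Ideal.span (Set.range fun i : Fin n => (X i : MvPolynomial (Fin n) k) ^ m))
            (Ideal.span {g}) = I →
        (∀ α ∈ g.support, ∀ i, α i ≤ m - 1) →
        ∃ c : k, c ≠ 0 ∧ g = c • f := by
  have hJ : Ideal.span (Set.range fun i : Fin n => (X i : MvPolynomial (Fin n) k) ^ m)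
      = Jd k n m := rfl
  rw [hJ] at hcolon
  have hcore := degree_core hm I s hs f hf0 e hfhom hcolon hbox
  refine ⟨by omega, ?_⟩
  intro g e' hg0 hghom hgcolon hgbox
  rw [hJ] at hgcolon
  have hcore' := degree_core hm I s hs g hg0 e' hghom hgcolon hgbox
  have hee : e' = e := by omega
  rw [hee] at hghom
  obtain ⟨α0, hα0⟩ : f.support.Nonempty := by
    rw [Finset.nonempty_iff_ne_empty]; simpa using hf0
  have hcf : coeff α0 f ≠ 0 := MvPolynomial.mem_support_iff.mp hα0
  have hα0e : α0.degree = e := supp_degree hfhom hα0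
  have hα0top : α0 ≤ topF n m := fun i => by rw [topF_apply]; exact hbox α0 hα0 i
  have htopbox : ∀ i, (topF n m) i ≤ m - 1 := fun i => le_of_eq (topF_apply i)
  have hγdeg : ∀ β : Fin n →₀ ℕ, β ≤ topF n m → β.degree = e →
      (topF n m - β).degree + e = n * (m - 1) := by
    intro β h1 h2
    rw [← h2, ← degree_add, tsub_add_cancel_of_le h1, topF_degree]
  have hγ0d : (topF n m - α0).degree + e = n * (m - 1) := hγdeg α0 hα0top hα0e
  -- coeff α0 g ≠ 0
  have hcg : coeff α0 g ≠ 0 := by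
    intro h0
    have hmemJg : monomial (topF n m - α0) (1 : k) * g ∈ Jd k n m := by
      apply mem_Jd_of_coeff_top hm
      · have := (isHomogeneous_monomial (1 : k)
          (rfl : (topF n m - α0).degree = (topF n m - α0).degree)).mul hghom
        rwa [hγ0d] at this
      · rw [mul_comm, coeff_top_mul hα0top, h0, zero_mul]
    have hI : monomial (topF n m - α0) (1 : k) ∈ I := by
      rw [← hgcolon, Ideal.mem_colon_span_singleton]; exact hmemJg
    rw [← hcolon, Ideal.mem_colon_span_singleton] at hI
    have := coeff_eq_zero_of_mem_Jd hm hI htopbox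
    rw [mul_comm, coeff_top_mul hα0top, mul_one] at this
    exact hcf this
  -- key proportionality
  have key : ∀ β : Fin n →₀ ℕ, β ≤ topF n m → β.degree = e →
      coeff β g * coeff α0 f = coeff α0 g * coeff β f := by
    intro β hβtop hβe
    have hγd : (topF n m - β).degree + e = n * (m - 1) := hγdeg β hβtop hβe
    set h1 : MvPolynomial (Fin n) k :=
      monomial (topF n m - β) (coeff α0 f) - monomial (topF n m - α0) (coeff β f) with hh1
    have hh1hom : h1.IsHomogeneous (topF n m - β).degree := by
      apply MvPolynomial.IsHomogeneous.sub
      · exact isHomogeneous_monomial _ rfl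
      · exact isHomogeneous_monomial _ (by omega)
    have hcoefff : ∀ p : MvPolynomial (Fin n) k, coeff (topF n m) (h1 * p) =
        coeff β p * coeff α0 f - coeff α0 p * coeff β f := by
      intro p
      rw [hh1, sub_mul, MvPolynomial.coeff_sub, mul_comm (monomial _ _) p,
        mul_comm (monomial _ _) p, coeff_top_mul hβtop, coeff_top_mul hα0top]
    have hmemJ : h1 * f ∈ Jd k n m := by
      apply mem_Jd_of_coeff_top hm
      · have := hh1hom.mul hfhom; rwa [hγd] at this
      · rw [hcoefff]; ring
    have hI : h1 ∈ I := by rw [← hcolon, Ideal.mem_colon_span_singleton]; exact hmemJ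
    have hmemJg : h1 * g ∈ Jd k n m := by
      rw [← hgcolon] at hI; exact Ideal.mem_colon_span_singleton.mp hI
    have := coeff_eq_zero_of_mem_Jd hm hmemJg htopbox
    rw [hcoefff] at this
    linear_combination this
  refine ⟨coeff α0 g / coeff α0 f, div_ne_zero hcg hcf, ?_⟩
  refine MvPolynomial.ext _ _ fun β => ?_
  rw [MvPolynomial.coeff_smul, smul_eq_mul]
  by_cases hcase : β ≤ topF n m ∧ β.degree = e
  · obtain ⟨h1, h2⟩ := hcase
    have hk := key β h1 h2
    field_simp
    linear_combination hk
  · have hfz : coeff β f = 0 := by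
      by_contra hc
      have hmem : β ∈ f.support := MvPolynomial.mem_support_iff.mpr hc
      exact hcase ⟨fun i => by rw [topF_apply]; exact hbox β hmem i, supp_degree hfhom hmem⟩
    have hgz : coeff β g = 0 := by
      by_contra hc
      have hmem : β ∈ g.support := MvPolynomial.mem_support_iff.mpr hc
      exact hcase ⟨fun i => by rw [topF_apply]; exact hgbox β hmem i, supp_degree hghom hmem⟩
    rw [hfz, hgz, mul_zero]
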